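/- Let {X_i}_{i≥1} be a martingale difference sequence (E[X_i | X_{i−1},…,X_1] = 0) with |X_i| ≤ c almost surely, and let σ_i² = E[X_i² | X_{i−1},…,X_1]. Then for all b > 0, G > 0, n ≥ 1: P{ |Σ_{i=1}^n X_i| > b and Σ_{i=1}^n σ_i² ≤ G } ≤ 2 exp(−b² / (2G + 2cb/3)). -/

import Mathlib

open MeasureTheory Real


lemma nonneg_of_hasDerivAt (f f' : ℝ → ℝ) (hd : ∀ y, HasDerivAt f (f' y) y)
    (h0 : f 0 = 0) (h' : ∀ y, 0 ≤ y → 0 ≤ f' y) : ∀ y, 0 ≤ y → 0 ≤ f y := by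
  intro y hy
  have hmono : MonotoneOn f (Set.Ici (0:ℝ)) := by
    refine monotoneOn_of_deriv_nonneg (convex_Ici 0) ?_ ?_ ?_
    · exact fun x _ => (hd x).continuousAt.continuousWithinAt
    · exact fun x _ => (hd x).differentiableAt.differentiableWithinAt
    · intro x hx
      rw [interior_Ici] at hx
      rw [(hd x).deriv]
      exact h' x hx.le
  simpa [h0] using hmono (Set.mem_Ici.2 le_rfl) hy hy

lemma mono_of_hasDerivAt (f f' : ℝ → ℝ) (hd : ∀ y, HasDerivAt f (f' y) y)
    (h' : ∀ y, 0 ≤ f' y) : Monotone f := by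
  refine monotone_of_deriv_nonneg (fun x => (hd x).differentiableAt) (fun x => ?_)
  rw [(hd x).deriv]; exact h' x

lemma aux_p (y : ℝ) (hy : 0 ≤ y) : 0 ≤ (y - 1) * exp y + 1 := by
  refine nonneg_of_hasDerivAt (fun y => (y - 1) * exp y + 1) (fun y => y * exp y)
    (fun y => ?_) (by norm_num) (fun y hy => by positivity) y hy
  have h1 : HasDerivAt (fun y : ℝ => (y - 1) * exp y) (1 * exp y + (y - 1) * exp y) y :=
    ((hasDerivAt_id y).sub_const 1).mul (Real.hasDerivAt_exp y)
  have h2 := h1.add_const 1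
  exact h2.congr_deriv (by ring)

lemma aux_q (y : ℝ) (hy : 0 ≤ y) : 0 ≤ (y - 2) * exp y + y + 2 := by
  refine nonneg_of_hasDerivAt (fun y => (y - 2) * exp y + y + 2)
    (fun y => (y - 1) * exp y + 1) (fun y => ?_) (by norm_num) aux_p y hy
  have h1 : HasDerivAt (fun y : ℝ => (y - 2) * exp y) (1 * exp y + (y - 2) * exp y) y :=
    ((hasDerivAt_id y).sub_const 2).mul (Real.hasDerivAt_exp y)
  have h2 := (h1.add (hasDerivAt_id y)).add_const 2
  exact h2.congr_deriv (by ring)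

lemma hasDerivAt_r (y : ℝ) :
    HasDerivAt (fun y : ℝ => exp y - 1 - y - y ^ 2 / 2) (exp y - 1 - y) y := by
  have h1 : HasDerivAt (fun y : ℝ => y ^ 2 / 2) y y := by
    simpa using (hasDerivAt_pow 2 y).div_const 2
  have h2 := (((Real.hasDerivAt_exp y).sub_const 1).sub (hasDerivAt_id y)).sub h1
  exact h2

lemma r_mono : Monotone (fun y : ℝ => exp y - 1 - y - y ^ 2 / 2) := by
  refine mono_of_hasDerivAt _ (fun y => exp y - 1 - y) hasDerivAt_r (fun y => ?_)
  show 0 ≤ exp y - 1 - y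
  have := Real.add_one_le_exp y
  linarith

lemma quad_le_exp (u : ℝ) (hu : 0 ≤ u) : 1 + u + u ^ 2 / 2 ≤ exp u := by
  have := r_mono hu
  simp only at this
  norm_num at this
  linarith

lemma exp_le_quad (u : ℝ) (hu : u ≤ 0) : exp u ≤ 1 + u + u ^ 2 / 2 := by
  have := r_mono hu
  simp only at this
  norm_num at this
  linarith

lemma s_hasDerivAt {y : ℝ} (hy : y ≠ 0) :
    HasDerivAt (fun y : ℝ => (exp y - 1 - y) / y ^ 2)
      (((exp y - 1) * y ^ 2 - (exp y - 1 - y) * (2 * y)) / (y ^ 2) ^ 2) y := by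
  have hn : HasDerivAt (fun y : ℝ => exp y - 1 - y) (exp y - 1) y := by
    have := ((Real.hasDerivAt_exp y).sub_const 1).sub (hasDerivAt_id y)
    exact this
  have hd : HasDerivAt (fun y : ℝ => y ^ 2) (2 * y) y := by
    simpa using hasDerivAt_pow 2 y
  exact hn.div hd (pow_ne_zero 2 hy)

lemma s_mono : MonotoneOn (fun y : ℝ => (exp y - 1 - y) / y ^ 2) (Set.Ioi (0:ℝ)) := by
  refine monotoneOn_of_deriv_nonneg (convex_Ioi 0) ?_ ?_ ?_
  · intro x hx
    exact (s_hasDerivAt (ne_of_gt hx)).continuousAt.continuousWithinAt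
  · intro x hx
    rw [interior_Ioi] at hx
    exact (s_hasDerivAt (ne_of_gt hx)).differentiableAt.differentiableWithinAt
  · intro x hx
    rw [interior_Ioi] at hx
    rw [(s_hasDerivAt (ne_of_gt hx)).deriv]
    have hq := aux_q x hx.le
    have hx0 : (0:ℝ) < x := hx
    have hx4 : (0:ℝ) < (x ^ 2) ^ 2 := by positivity
    refine div_nonneg ?_ hx4.le
    nlinarith [mul_nonneg hx0.le hq]

lemma ratio_mono {u v : ℝ} (hu : 0 < u) (huv : u ≤ v) :
    v ^ 2 * (exp u - 1 - u) ≤ u ^ 2 * (exp v - 1 - v) := by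
  have hv : 0 < v := lt_of_lt_of_le hu huv
  have := s_mono (Set.mem_Ioi.2 hu) (Set.mem_Ioi.2 hv) huv
  simp only at this
  rw [div_le_div_iff₀ (by positivity) (by positivity)] at this
  nlinarith [this]

lemma aux_g1 (u : ℝ) (hu : 0 ≤ u) :
    0 ≤ u + (exp u - 1 - u) / 3 - (1 - u / 3) * (exp u - 1) := by
  refine nonneg_of_hasDerivAt
    (fun u => u + (exp u - 1 - u) / 3 - (1 - u / 3) * (exp u - 1))
    (fun u => ((u - 1) * exp u + 1) / 3) (fun y => ?_)
    (by norm_num) (fun y hy => by linarith [aux_p y hy]) u hu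
  have hn : HasDerivAt (fun u : ℝ => exp u - 1 - u) (exp y - 1) y := by
    have := ((Real.hasDerivAt_exp y).sub_const 1).sub (hasDerivAt_id y)
    exact this
  have hB : HasDerivAt (fun u : ℝ => (exp u - 1 - u) / 3) ((exp y - 1) / 3) y := hn.div_const 3
  have hCl : HasDerivAt (fun u : ℝ => 1 - u / 3) (-(1 / 3)) y := by
    simpa using ((hasDerivAt_id y).div_const 3).const_sub 1
  have hC : HasDerivAt (fun u : ℝ => (1 - u / 3) * (exp u - 1))
      (-(1 / 3) * (exp y - 1) + (1 - y / 3) * exp y) y :=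
    hCl.mul ((Real.hasDerivAt_exp y).sub_const 1)
  have h2 := ((hasDerivAt_id y).add hB).sub hC
  exact h2.congr_deriv (by ring)

lemma aux_f (u : ℝ) (hu : 0 ≤ u) : (1 - u / 3) * (exp u - 1 - u) ≤ u ^ 2 / 2 := by
  have key := nonneg_of_hasDerivAt
    (fun u => u ^ 2 / 2 - (1 - u / 3) * (exp u - 1 - u))
    (fun u => u + (exp u - 1 - u) / 3 - (1 - u / 3) * (exp u - 1)) (fun y => ?_)
    (by norm_num) (fun y hy => aux_g1 y hy) u hu
  · linarith [key]
  have hD : HasDerivAt (fun u : ℝ => u ^ 2 / 2) y y := by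
    simpa using (hasDerivAt_pow 2 y).div_const 2
  have hn : HasDerivAt (fun u : ℝ => exp u - 1 - u) (exp y - 1) y := by
    have := ((Real.hasDerivAt_exp y).sub_const 1).sub (hasDerivAt_id y)
    exact this
  have hCl : HasDerivAt (fun u : ℝ => 1 - u / 3) (-(1 / 3)) y := by
    simpa using ((hasDerivAt_id y).div_const 3).const_sub 1
  have hE := hCl.mul hn
  have h2 := hD.sub hE
  exact h2.congr_deriv (by ring)

lemma key_pointwise {c l x : ℝ} (hc : 0 < c) (hl : 0 < l) (hx : |x| ≤ c) :
    exp (l * x) ≤ 1 + l * x + ((exp (l * c) - 1 - l * c) / c ^ 2) * x ^ 2 := by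
  have hxc : x ≤ c := le_of_abs_le hx
  have hxc' : -c ≤ x := neg_le_of_abs_le hx
  have hq := quad_le_exp (l * c) (by positivity)
  rcases lt_trichotomy x 0 with h0 | h0 | h0
  · have h1 : l * x ≤ 0 := by nlinarith
    have h2 := exp_le_quad (l * x) h1
    have h3 : l ^ 2 / 2 ≤ (exp (l * c) - 1 - l * c) / c ^ 2 := by
      rw [le_div_iff₀ (by positivity)]
      nlinarith
    nlinarith [sq_nonneg x, mul_le_mul_of_nonneg_right h3 (sq_nonneg x)]
  · simp [h0]
  · have hu : 0 < l * x := by positivity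
    have := ratio_mono hu (by nlinarith : l * x ≤ l * c)
    have hl2 : (0:ℝ) < l ^ 2 := by positivity
    have h2 : c ^ 2 * (exp (l * x) - 1 - l * x) ≤ x ^ 2 * (exp (l * c) - 1 - l * c) := by
      nlinarith [this]
    have h3 : exp (l * x) - 1 - l * x ≤ (exp (l * c) - 1 - l * c) / c ^ 2 * x ^ 2 := by
      rw [div_mul_eq_mul_div, le_div_iff₀ (by positivity : (0:ℝ) < c ^ 2)]
      nlinarith [h2]
    linarith

lemma bernstein_opt {b G c : ℝ} (hb : 0 < b) (hG : 0 < G) (hc : 0 < c) :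
    (exp (3 * b / (3 * G + c * b) * c) - 1 - 3 * b / (3 * G + c * b) * c) / c ^ 2 * G
      - 3 * b / (3 * G + c * b) * b ≤ -b ^ 2 / (2 * G + 2 * c * b / 3) := by
  have hD : (0:ℝ) < 3 * G + c * b := by positivity
  set u : ℝ := 3 * b / (3 * G + c * b) * c with hu
  have hu0 : 0 ≤ u := by positivity
  have hf := aux_f u hu0
  have h13 : 1 - u / 3 = 3 * G / (3 * G + c * b) := by
    rw [hu]; field_simp; ring
  rw [h13] at hf
  have hE' : exp u - 1 - u ≤ 3 * b ^ 2 * c ^ 2 / (2 * G * (3 * G + c * b)) := by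
    rw [div_mul_eq_mul_div, div_le_iff₀ hD] at hf
    rw [le_div_iff₀ (by positivity : (0:ℝ) < 2 * G * (3 * G + c * b))]
    have hu2 : u ^ 2 = 9 * b ^ 2 * c ^ 2 / (3 * G + c * b) ^ 2 := by
      rw [hu]; field_simp; ring
    rw [hu2] at hf
    have hD2 : (0:ℝ) < (3 * G + c * b) ^ 2 := by positivity
    have hf2 : 3 * G * (exp u - 1 - u) * (3 * G + c * b) ^ 2
        ≤ 9 * b ^ 2 * c ^ 2 / 2 * (3 * G + c * b) := by
      calc 3 * G * (exp u - 1 - u) * (3 * G + c * b) ^ 2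
          ≤ (9 * b ^ 2 * c ^ 2 / (3 * G + c * b) ^ 2 / 2 * (3 * G + c * b)) * (3 * G + c * b) ^ 2 := by
            nlinarith [hf]
        _ = 9 * b ^ 2 * c ^ 2 / 2 * (3 * G + c * b) := by field_simp
    nlinarith [hf2, mul_pos hG hD]
  have hmain : (exp u - 1 - u) / c ^ 2 * G ≤ 3 * b ^ 2 / (2 * (3 * G + c * b)) := by
    rw [div_mul_eq_mul_div, div_le_div_iff₀ (by positivity) (by positivity)]
    have h2 := (le_div_iff₀ (by positivity : (0:ℝ) < 2 * G * (3 * G + c * b))).mp hE'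
    nlinarith [h2]
  have hgoalrw : -b ^ 2 / (2 * G + 2 * c * b / 3)
      = 3 * b ^ 2 / (2 * (3 * G + c * b)) - 3 * b / (3 * G + c * b) * b := by
    field_simp
    ring
  rw [hgoalrw]
  linarith [hmain]

lemma integrable_of_abs_bound {Ω : Type*} {m0 : MeasurableSpace Ω} {μ : Measure Ω}
    [IsFiniteMeasure μ] {f : Ω → ℝ} (C : ℝ)
    (hm : AEStronglyMeasurable f μ) (h : ∀ᵐ ω ∂μ, |f ω| ≤ C) : Integrable f μ :=
  Integrable.mono' (integrable_const C) hm (by simpa [Real.norm_eq_abs] using h)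

lemma one_sided {Ω : Type*} {m0 : MeasurableSpace Ω} (μ : Measure Ω) [IsProbabilityMeasure μ]
    (ℱ : Filtration ℕ m0) (X : ℕ → Ω → ℝ) (c : ℝ) (hc : 0 < c)
    (hmeas : ∀ i, StronglyMeasurable[ℱ (i + 1)] (X i))
    (hmd : ∀ i, μ[X i | ℱ i] =ᵐ[μ] 0)
    (hbdd : ∀ i, ∀ᵐ ω ∂μ, |X i ω| ≤ c)
    (l a b G : ℝ) (hl : 0 < l) (ha : 0 ≤ a)
    (hla : a = (Real.exp (l * c) - 1 - l * c) / c ^ 2) (n : ℕ) :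
    μ {ω | b < ∑ i ∈ Finset.range n, X i ω ∧
        ∑ i ∈ Finset.range n, (μ[fun ω => (X i ω) ^ 2 | ℱ i]) ω ≤ G}
      ≤ ENNReal.ofReal (Real.exp (a * G - l * b)) := by
  -- notation
  set σ' : ℕ → Ω → ℝ := fun i => μ[fun ω => (X i ω) ^ 2 | ℱ i] with hσ'
  set Y : ℕ → Ω → ℝ := fun k ω =>
    Real.exp (l * ∑ i ∈ Finset.range k, X i ω - a * ∑ i ∈ Finset.range k, σ' i ω) with hYdef
  -- basic measurability and integrability
  have hXm : ∀ i, AEStronglyMeasurable (X i) μ :=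
    fun i => ((hmeas i).mono (ℱ.le _)).aestronglyMeasurable
  have hXint : ∀ i, Integrable (X i) μ :=
    fun i => integrable_of_abs_bound c (hXm i) (hbdd i)
  have hXsqint : ∀ i, Integrable (fun ω => X i ω ^ 2) μ := by
    intro i
    refine integrable_of_abs_bound (c ^ 2) (((hXm i).mul (hXm i)).congr
      (Filter.Eventually.of_forall fun ω => (pow_two (X i ω)).symm)) ?_
    filter_upwards [hbdd i] with ω h
    rw [abs_pow]
    exact pow_le_pow_left₀ (abs_nonneg _) h 2
  have hσ'meas : ∀ i, StronglyMeasurable[ℱ i] (σ' i) := fun i => stronglyMeasurable_condExp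
  have hσ'nonneg : ∀ i, 0 ≤ᵐ[μ] σ' i :=
    fun i => condExp_nonneg (Filter.Eventually.of_forall fun ω => sq_nonneg _)
  have hYmeas : ∀ k, StronglyMeasurable[ℱ k] (Y k) := by
    intro k
    have h1 : StronglyMeasurable[ℱ k] fun ω => ∑ i ∈ Finset.range k, X i ω :=
      Finset.stronglyMeasurable_fun_sum _ fun i hi =>
        (hmeas i).mono (ℱ.mono (Finset.mem_range.mp hi))
    have h2 : StronglyMeasurable[ℱ k] fun ω => ∑ i ∈ Finset.range k, σ' i ω :=
      Finset.stronglyMeasurable_fun_sum _ fun i hi =>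
        (hσ'meas i).mono (ℱ.mono (Finset.mem_range.mp hi).le)
    exact Real.continuous_exp.comp_stronglyMeasurable
      ((h1.const_mul l).sub (h2.const_mul a))
  have hYpos : ∀ k ω, 0 < Y k ω := fun k ω => Real.exp_pos _
  have hYbdd : ∀ k, ∀ᵐ ω ∂μ, Y k ω ≤ Real.exp (l * (k * c)) := by
    intro k
    have hb1 : ∀ᵐ ω ∂μ, ∀ i, |X i ω| ≤ c := ae_all_iff.2 hbdd
    have hb2 : ∀ᵐ ω ∂μ, ∀ i, 0 ≤ σ' i ω := ae_all_iff.2 hσ'nonneg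
    filter_upwards [hb1, hb2] with ω h1 h2
    have hs1 : ∑ i ∈ Finset.range k, X i ω ≤ k * c := by
      calc ∑ i ∈ Finset.range k, X i ω ≤ ∑ i ∈ Finset.range k, c :=
            Finset.sum_le_sum fun i _ => le_of_abs_le (h1 i)
        _ = k * c := by simp [mul_comm]
    have hs2 : 0 ≤ ∑ i ∈ Finset.range k, σ' i ω :=
      Finset.sum_nonneg fun i _ => h2 i
    have : l * ∑ i ∈ Finset.range k, X i ω - a * ∑ i ∈ Finset.range k, σ' i ω
        ≤ l * (k * c) := by
      have := mul_le_mul_of_nonneg_left hs1 hl.le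
      nlinarith [mul_nonneg ha hs2]
    exact Real.exp_le_exp.2 this
  have hYint : ∀ k, Integrable (Y k) μ := by
    intro k
    refine integrable_of_abs_bound (Real.exp (l * (k * c)))
      ((hYmeas k).mono (ℱ.le k)).aestronglyMeasurable ?_
    filter_upwards [hYbdd k] with ω h
    rwa [abs_of_pos (hYpos k ω)]
  -- the exponential supermartingale estimate
  have key : ∀ k, ∫ ω, Y k ω ∂μ ≤ 1 := by
    intro k
    induction k with
    | zero => simp [hYdef]
    | succ k ih =>
      set W : Ω → ℝ := fun ω => Y k ω * Real.exp (-(a * σ' k ω)) with hWdef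
      set Z : Ω → ℝ := fun ω => Real.exp (l * X k ω) with hZdef
      have hWpos : ∀ ω, 0 < W ω := fun ω => mul_pos (hYpos k ω) (Real.exp_pos _)
      have hWmeas : StronglyMeasurable[ℱ k] W :=
        (hYmeas k).mul (Real.continuous_exp.comp_stronglyMeasurable
          ((hσ'meas k).const_mul a).neg)
      have hWbdd : ∀ᵐ ω ∂μ, |W ω| ≤ Real.exp (l * (k * c)) := by
        filter_upwards [hYbdd k, hσ'nonneg k] with ω h1 h2
        rw [abs_of_pos (hWpos ω)]
        have : Real.exp (-(a * σ' k ω)) ≤ 1 := by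
          rw [Real.exp_le_one_iff]
          simp only [neg_nonpos]
          exact mul_nonneg ha (by simpa using h2)
        calc W ω = Y k ω * Real.exp (-(a * σ' k ω)) := rfl
          _ ≤ Y k ω * 1 := mul_le_mul_of_nonneg_left this (hYpos k ω).le
          _ = Y k ω := mul_one _
          _ ≤ _ := h1
      have hWint : Integrable W μ :=
        integrable_of_abs_bound _ ((hWmeas.mono (ℱ.le k)).aestronglyMeasurable) hWbdd
      have hZbdd : ∀ᵐ ω ∂μ, |Z ω| ≤ Real.exp (l * c) := by
        filter_upwards [hbdd k] with ω h
        rw [abs_of_pos (Real.exp_pos _)]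
        exact Real.exp_le_exp.2 (mul_le_mul_of_nonneg_left (le_of_abs_le h) hl.le)
      have hZmeas : AEStronglyMeasurable Z μ :=
        (Real.continuous_exp.comp_stronglyMeasurable
          (((hmeas k).mono (ℱ.le _)).const_mul l)).aestronglyMeasurable
      have hZint : Integrable Z μ := integrable_of_abs_bound _ hZmeas hZbdd
      have hWZint : Integrable (W * Z) μ := by
        refine integrable_of_abs_bound (Real.exp (l * (k * c)) * Real.exp (l * c))
          (((hWmeas.mono (ℱ.le k)).aestronglyMeasurable).mul hZmeas) ?_
        filter_upwards [hWbdd, hZbdd] with ω h1 h2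
        rw [Pi.mul_apply, abs_mul]
        exact mul_le_mul h1 h2 (abs_nonneg _) (Real.exp_pos _).le
      have hsplit : Y (k + 1) = W * Z := by
        funext ω
        simp only [hYdef, hWdef, hZdef, Finset.sum_range_succ, Pi.mul_apply]
        rw [← Real.exp_add, ← Real.exp_add]
        congr 1
        ring
      -- conditional expectation bound
      have hptwise : Z ≤ᵐ[μ] fun ω => 1 + l * X k ω + a * X k ω ^ 2 := by
        filter_upwards [hbdd k] with ω h
        rw [hla]
        exact key_pointwise hc hl h
      have hRHSint : Integrable (fun ω => 1 + l * X k ω + a * X k ω ^ 2) μ := by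
        have h := (integrable_const (1:ℝ)).add (((hXint k).const_mul l).add
          ((hXsqint k).const_mul a))
        exact h.congr (Filter.Eventually.of_forall fun ω => by
          simp only [Pi.add_apply]; ring)
      have hcond1 : μ[Z | ℱ k] ≤ᵐ[μ] μ[fun ω => 1 + l * X k ω + a * X k ω ^ 2 | ℱ k] :=
        condExp_mono hZint hRHSint hptwise
      have hdecomp : μ[fun ω => 1 + l * X k ω + a * X k ω ^ 2 | ℱ k]
          =ᵐ[μ] fun ω => 1 + a * σ' k ω := by
        have e1 : (fun ω => 1 + l * X k ω + a * X k ω ^ 2)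
            = (fun _ : Ω => (1:ℝ)) + (l • X k + a • fun ω => X k ω ^ 2) := by
          funext ω; simp [smul_eq_mul]; ring
        rw [e1]
        have i2 : Integrable (l • X k) μ := (hXint k).smul l
        have i3 : Integrable (a • fun ω => X k ω ^ 2) μ := (hXsqint k).smul a
        have h1 := condExp_add (μ := μ) (m := ℱ k) (integrable_const (1:ℝ)) (i2.add i3)
        have h2 := condExp_add (μ := μ) (m := ℱ k) i2 i3
        have h3 := condExp_smul (μ := μ) (m := ℱ k) l (X k)
        have h4 := condExp_smul (μ := μ) (m := ℱ k) a (fun ω => X k ω ^ 2)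
        have h5 : μ[(fun _ : Ω => (1:ℝ)) | ℱ k] = fun _ => (1:ℝ) := condExp_const (ℱ.le k) 1
        filter_upwards [h1, h2, h3, h4, hmd k] with ω e1' e2 e3 e4 e5
        simp only [Pi.add_apply] at e1' e2 ⊢
        rw [e1', h5, e2, e3, e4]
        simp only [Pi.smul_apply, smul_eq_mul, e5]
        simp [hσ']
      have hcond2 : μ[Z | ℱ k] ≤ᵐ[μ] fun ω => Real.exp (a * σ' k ω) := by
        filter_upwards [hcond1, hdecomp] with ω h1 h2
        refine le_trans (h1.trans (le_of_eq h2)) ?_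
        linarith [Real.add_one_le_exp (a * σ' k ω)]
      have hcond_nonneg : 0 ≤ᵐ[μ] μ[Z | ℱ k] :=
        condExp_nonneg (Filter.Eventually.of_forall fun ω => (Real.exp_pos _).le)
      have hcond_bdd : μ[Z | ℱ k] ≤ᵐ[μ] fun _ => Real.exp (l * c) := by
        have hZle : Z ≤ᵐ[μ] fun _ => Real.exp (l * c) :=
          hZbdd.mono fun ω h => le_of_abs_le h
        have h := condExp_mono (μ := μ) (m := ℱ k) hZint (integrable_const _) hZle
        rwa [condExp_const (ℱ.le k)] at h
      have hWcondint : Integrable (fun ω => W ω * (μ[Z | ℱ k]) ω) μ := by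
        refine integrable_of_abs_bound (Real.exp (l * (k * c)) * Real.exp (l * c))
          (((hWmeas.mono (ℱ.le k)).aestronglyMeasurable).mul
            (stronglyMeasurable_condExp.mono (ℱ.le k)).aestronglyMeasurable) ?_
        filter_upwards [hWbdd, hcond_nonneg, hcond_bdd] with ω h1 h2 h3
        rw [abs_mul]
        refine mul_le_mul h1 ?_ (abs_nonneg _) (Real.exp_pos _).le
        rw [abs_of_nonneg h2]; exact h3
      have hWexp : (fun ω => W ω * Real.exp (a * σ' k ω)) = Y k := by
        funext ω
        simp only [hWdef]
        rw [mul_assoc, ← Real.exp_add]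
        simp
      calc ∫ ω, Y (k + 1) ω ∂μ = ∫ ω, (W * Z) ω ∂μ := by rw [hsplit]
        _ = ∫ ω, (μ[W * Z | ℱ k]) ω ∂μ := (integral_condExp (ℱ.le k)).symm
        _ = ∫ ω, W ω * (μ[Z | ℱ k]) ω ∂μ := by
            refine integral_congr_ae ?_
            filter_upwards [condExp_mul_of_stronglyMeasurable_left hWmeas hWZint hZint] with ω h
            rw [h, Pi.mul_apply]
        _ ≤ ∫ ω, W ω * Real.exp (a * σ' k ω) ∂μ := by
            refine integral_mono_ae hWcondint (by rw [show (fun ω => W ω * Real.exp (a * σ' k ω)) = Y k from hWexp]; exact hYint k) ?_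
            filter_upwards [hcond2] with ω h
            exact mul_le_mul_of_nonneg_left h (hWpos ω).le
        _ = ∫ ω, Y k ω ∂μ := by rw [show (fun ω => W ω * Real.exp (a * σ' k ω)) = Y k from hWexp]
        _ ≤ 1 := ih
  -- Markov / Chernoff step
  set E : Set Ω := {ω | b < ∑ i ∈ Finset.range n, X i ω ∧
      ∑ i ∈ Finset.range n, σ' i ω ≤ G} with hE
  have hsub : E ⊆ {ω | Real.exp (l * b - a * G) ≤ Y n ω} := by
    intro ω hω
    obtain ⟨h1, h2⟩ := hω
    have : l * b - a * G ≤ l * ∑ i ∈ Finset.range n, X i ω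
        - a * ∑ i ∈ Finset.range n, σ' i ω := by
      have e1 := mul_le_mul_of_nonneg_left h1.le hl.le
      have e2 := mul_le_mul_of_nonneg_left h2 ha
      linarith
    exact Real.exp_le_exp.2 this
  have markov := mul_meas_ge_le_integral_of_nonneg
    (Filter.Eventually.of_forall fun ω => (hYpos n ω).le) (hYint n)
    (Real.exp (l * b - a * G))
  have hμE : (μ E).toReal ≤ Real.exp (a * G - l * b) := by
    have hmono : (μ E).toReal ≤ (μ {x | Real.exp (l * b - a * G) ≤ Y n x}).toReal :=
      ENNReal.toReal_mono (measure_ne_top μ _) (measure_mono hsub)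
    have hpos : (0:ℝ) < Real.exp (l * b - a * G) := Real.exp_pos _
    have h8 : Real.exp (l * b - a * G) * (μ E).toReal
        ≤ Real.exp (l * b - a * G) * Real.exp (a * G - l * b) := by
      rw [← Real.exp_add]
      have : l * b - a * G + (a * G - l * b) = 0 := by ring
      rw [this, Real.exp_zero]
      calc Real.exp (l * b - a * G) * (μ E).toReal
          ≤ Real.exp (l * b - a * G) * (μ {x | Real.exp (l * b - a * G) ≤ Y n x}).toReal :=
            mul_le_mul_of_nonneg_left hmono hpos.le
        _ ≤ ∫ ω, Y n ω ∂μ := markov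
        _ ≤ 1 := key n
    exact le_of_mul_le_mul_left h8 hpos
  calc μ E = ENNReal.ofReal (μ E).toReal := (ENNReal.ofReal_toReal (measure_ne_top μ E)).symm
    _ ≤ ENNReal.ofReal (Real.exp (a * G - l * b)) := ENNReal.ofReal_le_ofReal hμE

lemma one_sided_neg {Ω : Type*} {m0 : MeasurableSpace Ω} (μ : Measure Ω) [IsProbabilityMeasure μ]
    (ℱ : Filtration ℕ m0) (X : ℕ → Ω → ℝ) (c : ℝ) (hc : 0 < c)
    (hmeas : ∀ i, StronglyMeasurable[ℱ (i + 1)] (X i))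
    (hmd : ∀ i, μ[X i | ℱ i] =ᵐ[μ] 0)
    (hbdd : ∀ i, ∀ᵐ ω ∂μ, |X i ω| ≤ c)
    (l a b G : ℝ) (hl : 0 < l) (ha : 0 ≤ a)
    (hla : a = (Real.exp (l * c) - 1 - l * c) / c ^ 2) (n : ℕ) :
    μ {ω | ∑ i ∈ Finset.range n, X i ω < -b ∧
        ∑ i ∈ Finset.range n, (μ[fun ω => (X i ω) ^ 2 | ℱ i]) ω ≤ G}
      ≤ ENNReal.ofReal (Real.exp (a * G - l * b)) := by
  have hmeas' : ∀ i, StronglyMeasurable[ℱ (i + 1)] (-X i) := fun i => (hmeas i).neg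
  have hmd' : ∀ i, μ[-X i | ℱ i] =ᵐ[μ] 0 := by
    intro i
    refine (condExp_neg (X i) (ℱ i)).trans ?_
    filter_upwards [hmd i] with ω h
    simp only [Pi.neg_apply, h, Pi.zero_apply, neg_zero]
  have hbdd' : ∀ i, ∀ᵐ ω ∂μ, |(-X i) ω| ≤ c := fun i =>
    (hbdd i).mono fun ω h => by simpa [abs_neg] using h
  have h := one_sided μ ℱ (fun i => -X i) c hc hmeas' hmd' hbdd' l a b G hl ha hla n
  refine le_trans (le_of_eq ?_) h
  congr 1
  ext ω
  simp only [Set.mem_setOf_eq, Pi.neg_apply, Finset.sum_neg_distrib, neg_sq, lt_neg]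

theorem bernstein_martingale_differences {Ω : Type*} {m0 : MeasurableSpace Ω}
    (μ : Measure Ω) [IsProbabilityMeasure μ]
    (ℱ : Filtration ℕ m0) (X σ2 : ℕ → Ω → ℝ)
    (c : ℝ) (hc : 0 < c)
    (hmeas : ∀ i, StronglyMeasurable[ℱ (i + 1)] (X i))
    (hmd : ∀ i, μ[X i | ℱ i] =ᵐ[μ] 0)
    (hbdd : ∀ i, ∀ᵐ ω ∂μ, |X i ω| ≤ c)
    (hσ2 : ∀ i, σ2 i =ᵐ[μ] μ[fun ω => (X i ω) ^ 2 | ℱ i])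
    (b G : ℝ) (hb : 0 < b) (hG : 0 < G) (n : ℕ) (hn : 1 ≤ n) :
    μ {ω | b < |∑ i ∈ Finset.range n, X i ω| ∧ ∑ i ∈ Finset.range n, σ2 i ω ≤ G}
      ≤ ENNReal.ofReal (2 * Real.exp (-b ^ 2 / (2 * G + 2 * c * b / 3))) := by
  have hD : (0:ℝ) < 3 * G + c * b := by positivity
  set l : ℝ := 3 * b / (3 * G + c * b) with hldef
  have hl : 0 < l := by positivity
  set a : ℝ := (Real.exp (l * c) - 1 - l * c) / c ^ 2 with hadef
  have ha : 0 ≤ a := by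
    have h := quad_le_exp (l * c) (by positivity)
    rw [hadef]
    apply div_nonneg _ (sq_nonneg c)
    nlinarith
  have hexp : a * G - l * b ≤ -b ^ 2 / (2 * G + 2 * c * b / 3) := by
    have h := bernstein_opt hb hG hc
    rw [hadef, hldef]
    linarith [h]
  have h1 := one_sided μ ℱ X c hc hmeas hmd hbdd l a b G hl ha hadef n
  have h2 := one_sided_neg μ ℱ X c hc hmeas hmd hbdd l a b G hl ha hadef n
  set E1 : Set Ω := {ω | b < ∑ i ∈ Finset.range n, X i ω ∧
      ∑ i ∈ Finset.range n, (μ[fun ω => (X i ω) ^ 2 | ℱ i]) ω ≤ G} with hE1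
  set E2 : Set Ω := {ω | ∑ i ∈ Finset.range n, X i ω < -b ∧
      ∑ i ∈ Finset.range n, (μ[fun ω => (X i ω) ^ 2 | ℱ i]) ω ≤ G} with hE2
  have hae : ∀ᵐ ω ∂μ, ∀ i, σ2 i ω = (μ[fun ω => (X i ω) ^ 2 | ℱ i]) ω :=
    ae_all_iff.2 fun i => hσ2 i
  have hsub : ({ω | b < |∑ i ∈ Finset.range n, X i ω| ∧
      ∑ i ∈ Finset.range n, σ2 i ω ≤ G} : Set Ω) ≤ᵐ[μ] ((E1 ∪ E2 : Set Ω)) := by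
    filter_upwards [hae] with ω hω
    rintro ⟨hA1, hA2⟩
    simp only [hE1, hE2, Set.mem_union, Set.mem_setOf_eq]
    have hV : ∑ i ∈ Finset.range n, (μ[fun ω => (X i ω) ^ 2 | ℱ i]) ω ≤ G := by
      have he : ∑ i ∈ Finset.range n, σ2 i ω
          = ∑ i ∈ Finset.range n, (μ[fun ω => (X i ω) ^ 2 | ℱ i]) ω :=
        Finset.sum_congr rfl fun i _ => hω i
      linarith [he.symm.trans_le hA2]
    rcases lt_abs.mp hA1 with h | h
    · exact Or.inl ⟨h, hV⟩
    · exact Or.inr ⟨by linarith, hV⟩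
  calc μ {ω | b < |∑ i ∈ Finset.range n, X i ω| ∧ ∑ i ∈ Finset.range n, σ2 i ω ≤ G}
      ≤ μ (E1 ∪ E2) := measure_mono_ae hsub
    _ ≤ μ E1 + μ E2 := measure_union_le E1 E2
    _ ≤ ENNReal.ofReal (Real.exp (a * G - l * b))
        + ENNReal.ofReal (Real.exp (a * G - l * b)) := add_le_add h1 h2
    _ ≤ ENNReal.ofReal (2 * Real.exp (-b ^ 2 / (2 * G + 2 * c * b / 3))) := by
        rw [← ENNReal.ofReal_add (Real.exp_pos _).le (Real.exp_pos _).le]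
        apply ENNReal.ofReal_le_ofReal
        have hm := Real.exp_le_exp.2 hexp
        linarith
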